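/- Define Φ_0(x) = x, Φ_k(x) = x + Φ_{k-1}(x)², and let ξ_k be the unique positive root of Φ_k(x) = 1. Then ξ_k → 1/4 as k → ∞. -/
import Mathlib


open Filter

/-- `Φ_0(x) = x`, `Φ_k(x) = x + Φ_{k-1}(x)²`. -/
def Phi : ℕ → ℝ → ℝ
  | 0, x => x
  | k + 1, x => x + (Phi k x) ^ 2

lemma Phi_nonneg (k : ℕ) {x : ℝ} (hx : 0 ≤ x) : 0 ≤ Phi k x := by
  induction k with
  | zero => exact hx
  | succ k ih => exact add_nonneg hx (sq_nonneg _)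

lemma Phi_mono (k : ℕ) {x y : ℝ} (hx : 0 ≤ x) (hxy : x ≤ y) :
    Phi k x ≤ Phi k y := by
  induction k with
  | zero => exact hxy
  | succ k ih =>
    exact add_le_add hxy (pow_le_pow_left₀ (Phi_nonneg k hx) ih 2)

lemma Phi_quarter_lt (k : ℕ) : Phi k (1/4) < 1/2 := by
  induction k with
  | zero => norm_num [Phi]
  | succ k ih =>
    have h0 : (0:ℝ) ≤ Phi k (1/4) := Phi_nonneg k (by norm_num)
    have : (Phi k (1/4)) ^ 2 < (1/2)^2 := by
      apply pow_lt_pow_left₀ ih h0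
      norm_num
    show (1/4 : ℝ) + (Phi k (1/4))^2 < 1/2
    nlinarith

lemma Phi_grow (k : ℕ) {x : ℝ} (hx : 1/4 < x) :
    x + k * (x - 1/4) ≤ Phi k x := by
  induction k with
  | zero => simp [Phi]
  | succ k ih =>
    have key : Phi k x + (x - 1/4) ≤ x + (Phi k x)^2 := by
      nlinarith [sq_nonneg (Phi k x - 1/2)]
    have : x + (k+1 : ℕ) * (x - 1/4) ≤ Phi k x + (x - 1/4) := by
      push_cast
      linarith
    exact le_trans this key

/-- The unique positive roots `ξ_k` of `Φ_k(x) = 1` tend to `1/4` as `k → ∞`. -/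
theorem xi_tendsto_quarter (ξ : ℕ → ℝ)
    (hpos : ∀ k, 0 < ξ k) (hroot : ∀ k, Phi k (ξ k) = 1) :
    Tendsto ξ atTop (nhds (1 / 4)) := by
  have hgt : ∀ k, 1/4 < ξ k := by
    intro k
    by_contra h
    push_neg at h
    have := Phi_mono k (le_of_lt (hpos k)) h
    rw [hroot k] at this
    linarith [Phi_quarter_lt k]
  refine tendsto_order.2 ⟨fun a ha => ?_, fun a ha => ?_⟩
  · exact Eventually.of_forall fun k => lt_trans ha (hgt k)
  · -- a > 1/4 : eventually ξ k < a
    set ε := a - 1/4 with hε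
    have hεpos : 0 < ε := by simp [hε]; linarith
    obtain ⟨N, hN⟩ := exists_nat_ge (1 / ε)
    filter_upwards [eventually_ge_atTop N] with k hk
    by_contra h
    push_neg at h
    have h1 : (1:ℝ) ≤ k * ε := by
      rw [div_le_iff₀ hεpos] at hN
      calc (1:ℝ) ≤ N * ε := hN
        _ ≤ k * ε := by
            apply mul_le_mul_of_nonneg_right _ (le_of_lt hεpos)
            exact_mod_cast hk
    have h2 : a + k * ε ≤ Phi k a := Phi_grow k ha
    have h3 : Phi k a ≤ Phi k (ξ k) := Phi_mono k (by linarith) h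
    rw [hroot k] at h3
    linarith
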